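/- Let k be a field and M a linearly ordered type of monomials whose strict order is well-founded. Let T be a set of monic polynomials in M →₀ k with associated one-step reduction relation →. Suppose that for every monomial m ∈ M and every pair of one-step reductions single(m,1) → g₁ and single(m,1) → g₂ (where single(m,1) is the polynomial with coefficient 1 at m and 0 elsewhere), the difference g₁ − g₂ lies in the k-linear span of the set of those h ∈ T with lead(h) < m. Then → is confluent: for all f, g₁, g₂ with f ↠ g₁ and f ↠ g₂ there exists g with g₁ ↠ g and g₂ ↠ g, where ↠ is the reflexive-transitive closure of →. -/

import Mathlib

open Finsupp Relation

variable {k M : Type*}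

/-- The leading monomial of a nonzero polynomial `f : M →₀ k`: the maximum of its support. -/
noncomputable def leadMon [Zero k] [LinearOrder M] (f : M →₀ k) (hf : f ≠ 0) : M :=
  f.support.max' (Finsupp.support_nonempty_iff.mpr hf)

/-- A polynomial is monic if it is nonzero and its leading coefficient equals 1. -/
def IsMonic [Field k] [LinearOrder M] (f : M →₀ k) : Prop :=
  ∃ hf : f ≠ 0, f (leadMon f hf) = 1

/-- The one-step reduction relation associated with a set `T` of (monic) polynomials:
`f → g` iff there is `h ∈ T` with `f (lead h) ≠ 0` and `g = f - f (lead h) • h`. -/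
def StepRel [Field k] [LinearOrder M] (T : Set (M →₀ k)) (f g : M →₀ k) : Prop :=
  ∃ h ∈ T, ∃ hh : h ≠ 0, f (leadMon h hh) ≠ 0 ∧ g = f - f (leadMon h hh) • h

section Aux

variable [Field k] [LinearOrder M]

/-- The "trivialized" step relation: steps are allowed even when the coefficient is zero
(in which case the step does nothing). -/
def Step' (T : Set (M →₀ k)) (f g : M →₀ k) : Prop :=
  ∃ h ∈ T, ∃ hh : h ≠ 0, g = f - f (leadMon h hh) • h

/-- `f` is in normal form for `T`. -/
def RNormal (T : Set (M →₀ k)) (f : M →₀ k) : Prop :=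
  ∀ h ∈ T, ∀ hh : h ≠ 0, f (leadMon h hh) = 0

/-- `n` is a normal form of `f`. -/
def NFof (T : Set (M →₀ k)) (f n : M →₀ k) : Prop :=
  Relation.ReflTransGen (Step' T) f n ∧ RNormal T n

/-- `n` is the unique normal form of `f`. -/
def Good (T : Set (M →₀ k)) (f n : M →₀ k) : Prop :=
  NFof T f n ∧ ∀ n', NFof T f n' → n' = n

variable {T : Set (M →₀ k)}

lemma leadMon_mem (h : M →₀ k) (hh : h ≠ 0) : leadMon h hh ∈ h.support :=
  Finset.max'_mem _ _

lemma apply_eq_zero_of_leadMon_lt {h : M →₀ k} (hh : h ≠ 0) {m : M}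
    (hm : leadMon h hh < m) : h m = 0 := by
  by_contra hx
  exact absurd (Finset.le_max' _ m (Finsupp.mem_support_iff.mpr hx)) (not_le.mpr hm)

lemma le_leadMon {h : M →₀ k} (hh : h ≠ 0) {m : M} (hm : h m ≠ 0) :
    m ≤ leadMon h hh :=
  Finset.le_max' _ m (Finsupp.mem_support_iff.mpr hm)

lemma monic_apply_leadMon (hT : ∀ f ∈ T, IsMonic f) {h : M →₀ k} (hmem : h ∈ T)
    (hh : h ≠ 0) : h (leadMon h hh) = 1 := by
  obtain ⟨hf, h1⟩ := hT h hmem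
  exact h1

lemma step'_of_step {f g : M →₀ k} (h : StepRel T f g) : Step' T f g := by
  obtain ⟨h, hmem, hh, _, hg⟩ := h
  exact ⟨h, hmem, hh, hg⟩

lemma rtg_of_rtg' {f g : M →₀ k} (h : Relation.ReflTransGen (Step' T) f g) :
    Relation.ReflTransGen (StepRel T) f g := by
  induction h with
  | refl => exact .refl
  | @tail b c _ hstep ih =>
    obtain ⟨h, hmem, hh, rfl⟩ := hstep
    by_cases hc : b (leadMon h hh) = 0
    · rw [hc, zero_smul, sub_zero]; exact ih
    · exact ih.tail ⟨h, hmem, hh, hc, rfl⟩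

lemma rtg'_of_rtg {f g : M →₀ k} (h : Relation.ReflTransGen (StepRel T) f g) :
    Relation.ReflTransGen (Step' T) f g :=
  Relation.ReflTransGen.mono (fun _ _ => step'_of_step) _ _ h

lemma step'_rnormal {n g : M →₀ k} (hn : RNormal T n) (hs : Step' T n g) : g = n := by
  obtain ⟨h, hmem, hh, rfl⟩ := hs
  rw [hn h hmem hh, zero_smul, sub_zero]

lemma rtg'_rnormal {n g : M →₀ k} (hn : RNormal T n)
    (h : Relation.ReflTransGen (Step' T) n g) : g = n := by
  induction h with
  | refl => rfl
  | tail _ hstep ih => subst ih; exact step'_rnormal hn hstep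

lemma step'_add {a a' : M →₀ k} (hs : Step' T a a') (b : M →₀ k) :
    ∃ b', Step' T b b' ∧ Step' T (a + b) (a' + b') := by
  obtain ⟨h, hmem, hh, rfl⟩ := hs
  refine ⟨b - b (leadMon h hh) • h, ⟨h, hmem, hh, rfl⟩, ⟨h, hmem, hh, ?_⟩⟩
  rw [Finsupp.add_apply, add_smul]
  abel

lemma rtg'_add {a a' : M →₀ k} (hs : Relation.ReflTransGen (Step' T) a a')
    (b : M →₀ k) : ∃ b', Relation.ReflTransGen (Step' T) b b' ∧
      Relation.ReflTransGen (Step' T) (a + b) (a' + b') := by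
  induction hs with
  | refl => exact ⟨b, .refl, .refl⟩
  | tail _ h2 ih =>
    obtain ⟨b', hb, hab⟩ := ih
    obtain ⟨b'', h1, h2'⟩ := step'_add h2 b'
    exact ⟨b'', hb.tail h1, hab.tail h2'⟩

lemma rtg'_decomp {x s : M →₀ k} (hs : Relation.ReflTransGen (Step' T) x s) :
    ∀ a b : M →₀ k, x = a + b → ∃ a₁ b₁, Relation.ReflTransGen (Step' T) a a₁ ∧
      Relation.ReflTransGen (Step' T) b b₁ ∧ s = a₁ + b₁ := by
  induction hs with
  | refl => exact fun a b h => ⟨a, b, .refl, .refl, h⟩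
  | tail _ hstep ih =>
    intro a b h
    obtain ⟨a₁, b₁, ha, hb, rfl⟩ := ih a b h
    obtain ⟨h', hmem, hh, rfl⟩ := hstep
    refine ⟨a₁ - a₁ (leadMon h' hh) • h', b₁ - b₁ (leadMon h' hh) • h',
      ha.tail ⟨h', hmem, hh, rfl⟩, hb.tail ⟨h', hmem, hh, rfl⟩, ?_⟩
    rw [Finsupp.add_apply, add_smul]
    abel

lemma step'_smul {a a' : M →₀ k} (c : k) (hs : Step' T a a') :
    Step' T (c • a) (c • a') := by
  obtain ⟨h, hmem, hh, rfl⟩ := hs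
  refine ⟨h, hmem, hh, ?_⟩
  rw [Finsupp.smul_apply, smul_sub, smul_smul, smul_eq_mul]

lemma rtg'_smul {a a' : M →₀ k} (c : k) (hs : Relation.ReflTransGen (Step' T) a a') :
    Relation.ReflTransGen (Step' T) (c • a) (c • a') := by
  induction hs with
  | refl => exact .refl
  | tail _ hstep ih => exact ih.tail (step'_smul c hstep)

lemma rnormal_smul {a : M →₀ k} (c : k) (ha : RNormal T a) : RNormal T (c • a) := by
  intro h hmem hh
  rw [Finsupp.smul_apply, ha h hmem hh, smul_zero]

lemma rnormal_zero : RNormal T (0 : M →₀ k) := fun h hmem hh => rfl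

lemma good_rnormal {f : M →₀ k} (hf : RNormal T f) : Good T f f :=
  ⟨⟨.refl, hf⟩, fun n' hn' => rtg'_rnormal hf hn'.1⟩

lemma good_zero : Good T (0 : M →₀ k) 0 := good_rnormal rnormal_zero

/-- Existence of normal forms: termination of the reduction. -/
lemma exists_nf (hwf : WellFounded ((· < ·) : M → M → Prop))
    (hT : ∀ f ∈ T, IsMonic f) (f : M →₀ k) : ∃ n, NFof T f n := by
  classical
  -- map to `M →₀ ℕ` recording the support
  set π : (M →₀ k) → (M →₀ ℕ) :=
    fun f => f.mapRange (fun c => if c = 0 then 0 else 1) (by simp) with hπ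
  have hlex : WellFounded (Finsupp.Lex ((· > ·) : M → M → Prop) ((· < ·) : ℕ → ℕ → Prop)) := by
    refine Finsupp.Lex.wellFounded' (fun n => Nat.not_lt_zero n) ?_ ?_
    · exact Nat.lt_wfRel.wf
    · exact hwf
  have hsub : ∀ f g : M →₀ k, StepRel T f g →
      Finsupp.Lex ((· > ·) : M → M → Prop) ((· < ·) : ℕ → ℕ → Prop) (π g) (π f) := by
    intro f g hstep
    obtain ⟨h, hmem, hh, hne, rfl⟩ := hstep
    refine ⟨leadMon h hh, ?_, ?_⟩
    · intro d hd
      have hd0 : h d = 0 := apply_eq_zero_of_leadMon_lt hh hd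
      simp [hπ, Finsupp.mapRange_apply, Finsupp.sub_apply, Finsupp.smul_apply, hd0]
    · have hgl : (f - f (leadMon h hh) • h) (leadMon h hh) = 0 := by
        rw [Finsupp.sub_apply, Finsupp.smul_apply, monic_apply_leadMon hT hmem hh]
        simp
      simp [hπ, Finsupp.mapRange_apply, hgl, hne]
  have hwfstep : WellFounded (fun g f : M →₀ k => StepRel T f g) :=
    Subrelation.wf (fun {g f} h => hsub f g h) (InvImage.wf π hlex)
  induction f using hwfstep.induction with
  | _ f IH =>
    by_cases hnorm : RNormal T f
    · exact ⟨f, .refl, hnorm⟩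
    · simp only [RNormal, not_forall] at hnorm
      obtain ⟨h, hmem, hh, hne⟩ := hnorm
      obtain ⟨n, hn1, hn2⟩ := IH (f - f (leadMon h hh) • h) ⟨h, hmem, hh, hne, rfl⟩
      exact ⟨n, .head ⟨h, hmem, hh, rfl⟩ hn1, hn2⟩

lemma good_add (hwf : WellFounded ((· < ·) : M → M → Prop))
    (hT : ∀ f ∈ T, IsMonic f) {a b na nb : M →₀ k}
    (ha : Good T a na) (hb : Good T b nb) : Good T (a + b) (na + nb) := by
  have huniq : ∀ s, NFof T (a + b) s → s = na + nb := by
    rintro s ⟨hrtg, hnorm⟩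
    obtain ⟨a₁, b₁, ha₁, hb₁, rfl⟩ := rtg'_decomp hrtg a b rfl
    obtain ⟨na', hna'⟩ := exists_nf hwf hT (T := T) a₁
    have hna : na' = na := ha.2 na' ⟨ha₁.trans hna'.1, hna'.2⟩
    rw [hna] at hna'
    obtain ⟨b₂, hb₂, hsum⟩ := rtg'_add hna'.1 b₁
    have hs1 : na + b₂ = a₁ + b₁ := rtg'_rnormal hnorm hsum
    obtain ⟨nb', hnb'⟩ := exists_nf hwf hT (T := T) b₂
    have hnb : nb' = nb := hb.2 nb' ⟨(hb₁.trans hb₂).trans hnb'.1, hnb'.2⟩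
    rw [hnb] at hnb'
    obtain ⟨y, hy, hsum2⟩ := rtg'_add hnb'.1 na
    have hyna : y = na := rtg'_rnormal hna'.2 hy
    rw [hyna] at hsum2
    have hs2 : nb + na = b₂ + na := by
      refine rtg'_rnormal ?_ hsum2
      rw [add_comm b₂ na, hs1]; exact hnorm
    rw [add_comm b₂ na, hs1] at hs2
    rw [← hs2, add_comm]
  refine ⟨?_, huniq⟩
  obtain ⟨s, hs⟩ := exists_nf hwf hT (T := T) (a + b)
  rwa [huniq s hs] at hs

lemma good_smul (hT : ∀ f ∈ T, IsMonic f) {a n : M →₀ k} {c : k} (hc : c ≠ 0)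
    (ha : Good T a n) : Good T (c • a) (c • n) := by
  constructor
  · exact ⟨rtg'_smul c ha.1.1, rnormal_smul c ha.1.2⟩
  · rintro n' ⟨hr, hn'⟩
    have h2 := rtg'_smul c⁻¹ hr
    rw [smul_smul, inv_mul_cancel₀ hc, one_smul] at h2
    have : c⁻¹ • n' = n := ha.2 _ ⟨h2, rnormal_smul c⁻¹ hn'⟩
    rw [← this, smul_smul, mul_inv_cancel₀ hc, one_smul]

lemma good_smul_any (hT : ∀ f ∈ T, IsMonic f) {a n : M →₀ k} (c : k)
    (ha : Good T a n) : Good T (c • a) (c • n) := by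
  by_cases hc : c = 0
  · subst hc; rw [zero_smul, zero_smul]; exact good_zero
  · exact good_smul hT hc ha

/-- If `g₀` has unique normal form `n₀` and `g₀ - g₁` has unique normal form `0`,
then `g₁` also has unique normal form `n₀`. -/
lemma good_of_sub_good (hwf : WellFounded ((· < ·) : M → M → Prop))
    (hT : ∀ f ∈ T, IsMonic f) {g₀ g₁ n₀ : M →₀ k}
    (h0 : Good T g₀ n₀) (hdiff : Good T (g₀ - g₁) 0) : Good T g₁ n₀ := by
  have h1 : Good T ((-1 : k) • (g₀ - g₁)) ((-1 : k) • (0 : M →₀ k)) :=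
    good_smul_any hT _ hdiff
  have h2 := good_add hwf hT h0 h1
  have e1 : g₀ + (-1 : k) • (g₀ - g₁) = g₁ := by
    rw [neg_one_smul]; abel
  have e2 : n₀ + (-1 : k) • (0 : M →₀ k) = n₀ := by simp
  rwa [e1, e2] at h2

lemma good_of_support (hwf : WellFounded ((· < ·) : M → M → Prop))
    (hT : ∀ f ∈ T, IsMonic f) (f : M →₀ k)
    (hf : ∀ m' ∈ f.support, ∃ n, Good T (Finsupp.single m' 1) n) :
    ∃ n, Good T f n := by
  classical
  induction f using Finsupp.induction with
  | zero => exact ⟨0, good_zero⟩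
  | single_add a c f haf hc ih =>
    have hsupp : (Finsupp.single a c + f).support = insert a f.support := by
      rw [Finsupp.support_add_eq, Finsupp.support_single_ne_zero a hc]
      · rw [← Finset.insert_eq]
      · rw [Finsupp.support_single_ne_zero a hc]
        simpa using haf
    obtain ⟨nf, hnf⟩ := ih (fun m' hm' => hf m' (by rw [hsupp]; exact Finset.mem_insert_of_mem hm'))
    obtain ⟨na, hna⟩ := hf a (by rw [hsupp]; exact Finset.mem_insert_self a _)
    have h1 : Good T (c • Finsupp.single a 1) (c • na) := good_smul_any hT c hna
    have h2 := good_add hwf hT h1 hnf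
    rw [Finsupp.smul_single, smul_eq_mul, mul_one] at h2
    exact ⟨c • na + nf, h2⟩

end Aux

/-- If every pair of one-step reductions of a single monomial `single m 1` has a
difference lying in the span of the elements of `T` with leading monomial `< m`,
then the reduction relation is confluent. -/
theorem stepRel_confluent [Field k] [LinearOrder M]
    (hwf : WellFounded ((· < ·) : M → M → Prop))
    (T : Set (M →₀ k)) (hT : ∀ f ∈ T, IsMonic f)
    (hamb : ∀ m : M, ∀ g₁ g₂ : M →₀ k,
      StepRel T (Finsupp.single m 1) g₁ → StepRel T (Finsupp.single m 1) g₂ →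
      g₁ - g₂ ∈ Submodule.span k {h : M →₀ k | h ∈ T ∧ ∃ hh : h ≠ 0, leadMon h hh < m}) :
    ∀ f g₁ g₂ : M →₀ k, Relation.ReflTransGen (StepRel T) f g₁ →
      Relation.ReflTransGen (StepRel T) f g₂ →
      ∃ g : M →₀ k, Relation.ReflTransGen (StepRel T) g₁ g ∧
        Relation.ReflTransGen (StepRel T) g₂ g := by
  classical
  -- Main induction: every single monomial has a unique normal form.
  have good_single : ∀ m : M, ∃ n, Good T (Finsupp.single m 1) n := by
    intro m
    induction m using hwf.induction with
    | _ m IH =>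
    -- everything supported strictly below `m` has a unique normal form
    have below : ∀ f : M →₀ k, (∀ m' ∈ f.support, m' < m) → ∃ n, Good T f n := by
      intro f hf
      exact good_of_support hwf hT f (fun m' hm' => IH m' (hf m' hm'))
    -- any one-step reduction of `single m 1` is supported strictly below `m`
    have step_below : ∀ g : M →₀ k, StepRel T (Finsupp.single m 1) g →
        ∀ m' ∈ g.support, m' < m := by
      rintro g ⟨h, hmem, hh, hne, rfl⟩ m' hm'
      have hlm : leadMon h hh = m := by
        by_contra hx
        rw [Finsupp.single_apply, if_neg (fun e => hx e.symm)] at hne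
        exact hne rfl
      rw [Finsupp.mem_support_iff] at hm'
      rcases lt_or_ge m' m with h1 | h1
      · exact h1
      rcases eq_or_lt_of_le h1 with rfl | h2
      · exfalso
        apply hm'
        rw [Finsupp.sub_apply, Finsupp.smul_apply, Finsupp.single_apply, if_pos rfl]
        have := monic_apply_leadMon hT hmem hh
        rw [hlm] at this
        rw [this, hlm]
        simp
      · exfalso
        apply hm'
        have hh0 : h m' = 0 := apply_eq_zero_of_leadMon_lt hh (hlm ▸ h2)
        rw [Finsupp.sub_apply, Finsupp.smul_apply, hh0,
          Finsupp.single_apply, if_neg (ne_of_lt h2)]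
        simp
    by_cases hred : ∃ h ∈ T, ∃ hh : h ≠ 0, leadMon h hh = m
    · obtain ⟨h₀, h₀T, hh₀, hL₀⟩ := hred
      have hcoeff : (Finsupp.single m 1 : M →₀ k) (leadMon h₀ hh₀) ≠ 0 := by
        rw [hL₀, Finsupp.single_apply, if_pos rfl]; exact one_ne_zero
      set g₀ : M →₀ k :=
        Finsupp.single m 1 - (Finsupp.single m 1 : M →₀ k) (leadMon h₀ hh₀) • h₀ with hg₀
      have hstep₀ : StepRel T (Finsupp.single m 1) g₀ := ⟨h₀, h₀T, hh₀, hcoeff, rfl⟩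
      obtain ⟨n₀, hn₀⟩ := below g₀ (step_below g₀ hstep₀)
      -- elements of the span of lower-lead elements of `T` reduce uniquely to zero
      have span_good : ∀ x ∈ Submodule.span k
          {h : M →₀ k | h ∈ T ∧ ∃ hh : h ≠ 0, leadMon h hh < m}, Good T x 0 := by
        intro x hx
        induction hx using Submodule.span_induction with
        | mem x hxmem =>
          obtain ⟨hxT, hxne, hlt⟩ := hxmem
          have hx_supp : ∀ m' ∈ x.support, m' < m := fun m' hm' =>
            lt_of_le_of_lt (le_leadMon hxne (Finsupp.mem_support_iff.mp hm')) hlt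
          obtain ⟨n, hn⟩ := below x hx_supp
          have hstep : Step' T x 0 := by
            refine ⟨x, hxT, hxne, ?_⟩
            rw [monic_apply_leadMon hT hxT hxne, one_smul, sub_self]
          have h0 : NFof T x 0 := ⟨.tail .refl hstep, rnormal_zero⟩
          have : (0 : M →₀ k) = n := hn.2 0 h0
          rwa [← this] at hn
        | zero => exact good_zero
        | add x y hx hy ihx ihy =>
          have := good_add hwf hT ihx ihy
          rwa [add_zero] at this
        | smul c x hx ihx =>
          have := good_smul_any hT c ihx
          rwa [smul_zero] at this
      refine ⟨n₀, ⟨(.head (step'_of_step hstep₀) hn₀.1.1), hn₀.1.2⟩, ?_⟩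
      rintro n' ⟨hr, hnorm'⟩
      have hr' : Relation.ReflTransGen (StepRel T) (Finsupp.single m 1) n' := rtg_of_rtg' hr
      rcases hr'.cases_head with rfl | ⟨g₁, hstep₁, hrest⟩
      · exfalso
        have := hnorm' h₀ h₀T hh₀
        rw [hL₀, Finsupp.single_apply, if_pos rfl] at this
        exact one_ne_zero this
      · obtain ⟨n₁, hn₁⟩ := below g₁ (step_below g₁ hstep₁)
        have hdiff : Good T (g₀ - g₁) 0 := by
          have hmem := hamb m g₀ g₁ hstep₀ hstep₁
          exact span_good _ hmem
        have hg₁good : Good T g₁ n₀ := good_of_sub_good hwf hT hn₀ hdiff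
        exact hg₁good.2 n' ⟨rtg'_of_rtg hrest, hnorm'⟩
    · -- `single m 1` is normal
      push_neg at hred
      refine ⟨Finsupp.single m 1, good_rnormal ?_⟩
      intro h hmem hh
      rw [Finsupp.single_apply, if_neg]
      exact fun e => hred h hmem hh e.symm
  -- every polynomial has a unique normal form
  have good_all : ∀ f : M →₀ k, ∃ n, Good T f n := fun f =>
    good_of_support hwf hT f (fun m' _ => good_single m')
  intro f g₁ g₂ h₁ h₂
  obtain ⟨n, hn⟩ := good_all f
  obtain ⟨s₁, hs₁⟩ := exists_nf hwf hT (T := T) g₁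
  obtain ⟨s₂, hs₂⟩ := exists_nf hwf hT (T := T) g₂
  have e₁ : s₁ = n := hn.2 s₁ ⟨(rtg'_of_rtg h₁).trans hs₁.1, hs₁.2⟩
  have e₂ : s₂ = n := hn.2 s₂ ⟨(rtg'_of_rtg h₂).trans hs₂.1, hs₂.2⟩
  exact ⟨n, rtg_of_rtg' (e₁ ▸ hs₁.1), rtg_of_rtg' (e₂ ▸ hs₂.1)⟩
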